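/- (First part of the smoothness lemma for measurement probabilities of parameterized quantum circuits.) Let P be a POVM element. Then the measurement probability f(θ) = ⟨ψ(θ), P ψ(θ)⟩ is L₁-smooth with L₁ = 4·M·H_max²: for all α, β ∈ ℝ^M, ‖∇f(α) − ∇f(β)‖₂ ≤ 4·M·H_max² · ‖α − β‖₂. -/

import Mathlib

open scoped InnerProductSpace ComplexOrder

/-- The `ℓ² → ℓ²` operator norm of a square matrix. -/
noncomputable def l2OpNorm {𝕜 : Type*} [RCLike 𝕜] {n : Type*} [Fintype n] [DecidableEq n]
    (A : Matrix n n 𝕜) : ℝ :=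
  ‖LinearMap.toContinuousLinearMap (Matrix.toEuclideanLin A)‖

/-- The parameterized gate `U_j(t) = exp(i t H_j)`. -/
noncomputable def gate {d : ℕ} (Hj : Matrix (Fin d) (Fin d) ℂ) (t : ℝ) :
    Matrix (Fin d) (Fin d) ℂ :=
  NormedSpace.exp ((Complex.I * (t : ℂ)) • Hj)

/-- The circuit state `ψ(θ) = V_M U_M(θ_M) ⋯ V_1 U_1(θ_1) V_0 ψ₀`, as a function of
`θ ∈ ℝ^M` (with the Euclidean norm). -/
noncomputable def circuitState {d M : ℕ}
    (V : Fin (M + 1) → Matrix (Fin d) (Fin d) ℂ)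
    (H : Fin M → Matrix (Fin d) (Fin d) ℂ)
    (ψ₀ : EuclideanSpace ℂ (Fin d)) (θ : EuclideanSpace ℝ (Fin M)) :
    EuclideanSpace ℂ (Fin d) :=
  Matrix.toEuclideanLin
    ((List.ofFn (fun j : Fin M => V j.succ * gate (H j) (θ j))).reverse.prod * V 0) ψ₀

/-- `H_max = max_j ‖H_j‖`, with the `ℓ²→ℓ²` operator norm. -/
noncomputable def Hmax {d M : ℕ} (H : Fin M → Matrix (Fin d) (Fin d) ℂ) : ℝ :=
  ⨆ j, l2OpNorm (H j)

/-- A POVM element: a matrix `P` such that both `P` and `1 - P` are positive semidefinite. -/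
def IsPOVMElement {d : ℕ} (P : Matrix (Fin d) (Fin d) ℂ) : Prop :=
  P.PosSemidef ∧ (1 - P).PosSemidef

/-- The measurement probability `f(θ) = ⟨ψ(θ), P ψ(θ)⟩`. -/
noncomputable def measProb {d M : ℕ}
    (V : Fin (M + 1) → Matrix (Fin d) (Fin d) ℂ)
    (H : Fin M → Matrix (Fin d) (Fin d) ℂ)
    (ψ₀ : EuclideanSpace ℂ (Fin d))
    (P : Matrix (Fin d) (Fin d) ℂ) (θ : EuclideanSpace ℝ (Fin M)) : ℝ :=
  (⟪circuitState V H ψ₀ θ, Matrix.toEuclideanLin P (circuitState V H ψ₀ θ)⟫_ℂ).re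

/-! ### Auxiliary development -/

set_option maxHeartbeats 1000000
set_option synthInstance.maxHeartbeats 200000

noncomputable section QAux
namespace QAux

open NormedSpace

abbrev Hsp (d : ℕ) := EuclideanSpace ℂ (Fin d)
abbrev CA (d : ℕ) := Hsp d →L[ℂ] Hsp d
abbrev Epar (M : ℕ) := EuclideanSpace ℝ (Fin M)

variable {d M : ℕ}

instance : ContinuousStar (CA d) := by
  refine ⟨?_⟩
  have h : (star : CA d → CA d) = fun x => ContinuousLinearMap.adjoint x := by
    funext x; exact ContinuousLinearMap.star_eq_adjoint x
  rw [h]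
  exact (ContinuousLinearMap.adjoint : CA d ≃ₗᵢ⋆[ℂ] CA d).continuous

/-- `Matrix.toEuclideanCLM` as used throughout. -/
def pim : Matrix (Fin d) (Fin d) ℂ ≃⋆ₐ[ℂ] CA d := Matrix.toEuclideanCLM

lemma pim_apply (A : Matrix (Fin d) (Fin d) ℂ) (v : Hsp d) :
    pim A v = Matrix.toEuclideanLin A v := by
  have := Matrix.coe_toEuclideanCLM_eq_toEuclideanLin (𝕜 := ℂ) A
  exact DFunLike.congr_fun this v

lemma ofFn_rev {α : Type*} : ∀ {n : ℕ} (f : Fin n → α),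
    (List.ofFn f).reverse = List.ofFn (fun i => f i.rev)
  | 0, f => by simp
  | (n+1), f => by
    rw [List.ofFn_succ, List.reverse_cons, ofFn_rev (fun i => f i.succ)]
    rw [List.ofFn_succ' (fun i : Fin (n+1) => f i.rev)]
    rw [List.concat_eq_append]
    congr 1
    · exact List.ofFn_inj.mpr (funext fun i => by rw [Fin.rev_castSucc])
    · simp [Fin.rev_last]


/-- `pim` as a continuous linear equivalence. -/
def pimL : Matrix (Fin d) (Fin d) ℂ ≃L[ℂ] CA d :=
  LinearEquiv.toContinuousLinearEquiv
    { toFun := (pim : Matrix (Fin d) (Fin d) ℂ → CA d)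
      invFun := (pim.symm : CA d → Matrix (Fin d) (Fin d) ℂ)
      map_add' := map_add pim
      map_smul' := map_smul pim
      left_inv := pim.left_inv
      right_inv := pim.right_inv }

lemma pim_exp (B : Matrix (Fin d) (Fin d) ℂ) :
    pim (NormedSpace.exp B) = NormedSpace.exp (pim B) := by
  have hsum : Summable (fun n : ℕ => ((n.factorial : ℂ))⁻¹ • (pim B) ^ n) :=
    NormedSpace.expSeries_summable' (𝕂 := ℂ) (pim B)
  have h1 : NormedSpace.exp B
      = ∑' n : ℕ, ((n.factorial : ℂ))⁻¹ • B ^ n := by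
    rw [NormedSpace.exp_eq_tsum ℂ]
  have h2 : (fun n : ℕ => ((n.factorial : ℂ))⁻¹ • B ^ n)
      = fun n : ℕ => (pimL (d := d)).symm.toContinuousLinearMap
          (((n.factorial : ℂ))⁻¹ • (pim B) ^ n) := by
    funext n
    have : (pimL (d := d)).symm.toContinuousLinearMap (((n.factorial : ℂ))⁻¹ • (pim B) ^ n)
        = ((n.factorial : ℂ))⁻¹ • pim.symm ((pim B) ^ n) := by
      simp only [ContinuousLinearMap.map_smul]; rfl
    rw [this, map_pow, pim.symm_apply_apply]
  have h3 : NormedSpace.exp B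
      = pim.symm (∑' n : ℕ, ((n.factorial : ℂ))⁻¹ • (pim B) ^ n) := by
    rw [h1, h2, ← ContinuousLinearMap.map_tsum _ hsum]; rfl
  rw [h3, pim.apply_symm_apply, NormedSpace.exp_eq_tsum ℂ]

/-- The skew-Hermitian generators. -/
def xf (H : Fin M → Matrix (Fin d) (Fin d) ℂ) (j : Fin M) : CA d :=
  Complex.I • pim (H j)

lemma pim_gate (H : Fin M → Matrix (Fin d) (Fin d) ℂ) (j : Fin M) (t : ℝ) :
    pim (gate (H j) t) = NormedSpace.exp (t • xf H j) := by
  unfold gate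
  rw [pim_exp]
  have h1 : pim ((Complex.I * (t : ℂ)) • H j) = t • xf H j := by
    rw [map_smul, mul_comm, mul_smul, xf]
    rw [show ((t : ℂ)) = algebraMap ℝ ℂ t from rfl]
    exact algebraMap_smul ℂ t (Complex.I • pim (H j))
  rw [h1]

lemma star_xf (H : Fin M → Matrix (Fin d) (Fin d) ℂ) (hH : ∀ j, (H j).IsHermitian) (j : Fin M) :
    star (xf H j) = - xf H j := by
  unfold xf
  rw [star_smul, ← map_star]
  rw [Matrix.star_eq_conjTranspose, (hH j).eq]
  rw [RCLike.star_def, Complex.conj_I]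
  exact neg_smul Complex.I (pim (H j))

lemma norm_exp_xf (hd : 0 < d) (H : Fin M → Matrix (Fin d) (Fin d) ℂ)
    (hH : ∀ j, (H j).IsHermitian) (j : Fin M) (t : ℝ) :
    ‖NormedSpace.exp (t • xf H j)‖ = 1 := by
  haveI : Nonempty (Fin d) := ⟨⟨0, hd⟩⟩
  have hskew : t • xf H j ∈ skewAdjoint (CA d) := by
    rw [skewAdjoint.mem_iff, ← algebraMap_smul ℂ t (xf H j), star_smul, star_xf H hH j,
      smul_neg]
    congr 1
    rw [show algebraMap ℝ ℂ t = ((t : ℝ) : ℂ) from rfl, RCLike.star_def, Complex.conj_ofReal]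
  letI : NormedAlgebra ℚ (CA d) := .restrictScalars ℚ ℂ (CA d)
  have := NormedSpace.exp_mem_unitary_of_mem_skewAdjoint hskew
  exact CStarRing.norm_coe_unitary ⟨_, this⟩

lemma pim_unitary (hd : 0 < d) {A : Matrix (Fin d) (Fin d) ℂ}
    (hA : A ∈ Matrix.unitaryGroup (Fin d) ℂ) : ‖pim A‖ = 1 := by
  haveI : Nonempty (Fin d) := ⟨⟨0, hd⟩⟩
  have h : pim A ∈ unitary (CA d) := by
    rw [Unitary.mem_iff] at hA ⊢
    refine ⟨?_, ?_⟩
    · rw [← map_star, ← map_mul, hA.1, map_one]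
    · rw [← map_star, ← map_mul, hA.2, map_one]
  exact CStarRing.norm_coe_unitary ⟨_, h⟩


/-- Evaluation at a fixed vector, as a real-linear CLM. -/
def evCLM (v : Hsp d) : CA d →L[ℝ] Hsp d :=
  LinearMap.mkContinuous
    { toFun := fun X => X v
      map_add' := fun X Y => rfl
      map_smul' := fun c X => rfl }
    ‖v‖ (fun X => by
      simpa [mul_comm] using X.le_opNorm v)

@[simp] lemma evCLM_apply (v : Hsp d) (X : CA d) : evCLM v X = X v := rfl

/-- The circuit, as a continuous multilinear map of the individual gates
(listed left-to-right, i.e. slot `j` is applied `j`-th). -/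
def bigΨ (v : Hsp d) (M : ℕ) : ContinuousMultilinearMap ℝ (fun _ : Fin M => CA d) (Hsp d) :=
  (evCLM v).compContinuousMultilinearMap
    ((ContinuousMultilinearMap.mkPiAlgebraFin ℝ M (CA d)).domDomCongr Fin.revPerm)

lemma bigΨ_apply (v : Hsp d) (a : Fin M → CA d) :
    bigΨ v M a = ((List.ofFn fun i : Fin M => a i.rev).prod) v := rfl

lemma bigΨ_apply' (v : Hsp d) (a : Fin M → CA d) :
    bigΨ v M a = ((List.ofFn a).reverse.prod) v := by
  rw [bigΨ_apply, ofFn_rev]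

/-- The family of gate factors. -/
def wfam (x C : Fin M → CA d) (θ : Epar M) : Fin M → CA d :=
  fun j => C j * NormedSpace.exp (θ j • x j)

/-- The circuit state as a function of the parameters, with arbitrary coefficients `C`. -/
def stF (v : Hsp d) (x C : Fin M → CA d) (θ : Epar M) : Hsp d :=
  bigΨ v M (wfam x C θ)

/-- Differentiating the `l`-th slot multiplies the coefficient by `x l`. -/
def dC (x C : Fin M → CA d) (l : Fin M) : Fin M → CA d :=
  Function.update C l (C l * x l)

lemma wfam_update (x C : Fin M → CA d) (θ : Epar M) (l : Fin M) :
    wfam x (dC x C l) θ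
      = Function.update (wfam x C θ) l (C l * x l * NormedSpace.exp (θ l • x l)) := by
  funext i
  by_cases h : i = l
  · subst h; simp [wfam, dC]
  · simp [wfam, dC, Function.update_of_ne h]

lemma wfam_hasFDerivAt (x C : Fin M → CA d) (θ : Epar M) :
    HasFDerivAt (wfam x C)
      (ContinuousLinearMap.pi fun j =>
        (EuclideanSpace.proj j : Epar M →L[ℝ] ℝ).smulRight
          (C j * x j * NormedSpace.exp (θ j • x j))) θ := by
  apply (hasFDerivAt_pi (𝕜 := ℝ)).2
  intro j
  have h1 : HasDerivAt (fun t : ℝ => C j * NormedSpace.exp (t • x j))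
      (C j * (x j * NormedSpace.exp (θ j • x j))) (θ j) :=
    (hasDerivAt_exp_smul_const' (𝕂 := ℝ) (x j) (θ j)).const_mul (C j)
  have h2 : HasFDerivAt (fun θ : Epar M => θ j)
      (EuclideanSpace.proj (𝕜 := ℝ) j) θ :=
    ContinuousLinearMap.hasFDerivAt (EuclideanSpace.proj j : Epar M →L[ℝ] ℝ)
  have h3 := (hasDerivAt_iff_hasFDerivAt.1 h1).comp θ h2
  have h4 : (ContinuousLinearMap.toSpanSingleton ℝ (C j * (x j * NormedSpace.exp (θ j • x j)))).comp
        (EuclideanSpace.proj (𝕜 := ℝ) j)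
      = (EuclideanSpace.proj (𝕜 := ℝ) j).smulRight
          (C j * x j * NormedSpace.exp (θ j • x j)) := by
    ext h
    simp [mul_assoc]
  rw [h4] at h3
  exact h3

lemma stF_hasFDerivAt (v : Hsp d) (x C : Fin M → CA d) (θ : Epar M) :
    HasFDerivAt (stF v x C)
      (∑ l : Fin M, (EuclideanSpace.proj l : Epar M →L[ℝ] ℝ).smulRight (stF v x (dC x C l) θ))
      θ := by
  have hb := ContinuousMultilinearMap.hasFDerivAt (bigΨ v M) (x := wfam x C θ)
  have h := hb.comp θ (wfam_hasFDerivAt x C θ)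
  have heq : ((bigΨ v M).linearDeriv (wfam x C θ)).comp
        (ContinuousLinearMap.pi fun j =>
          (EuclideanSpace.proj j : Epar M →L[ℝ] ℝ).smulRight
            (C j * x j * NormedSpace.exp (θ j • x j)))
      = ∑ l : Fin M, (EuclideanSpace.proj l : Epar M →L[ℝ] ℝ).smulRight
          (stF v x (dC x C l) θ) := by
    refine ContinuousLinearMap.ext fun h' => ?_
    rw [ContinuousLinearMap.comp_apply, ContinuousMultilinearMap.linearDeriv_apply,
      ContinuousLinearMap.sum_apply]
    refine Finset.sum_congr rfl fun l _ => ?_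
    rw [ContinuousLinearMap.smulRight_apply]
    have : (ContinuousLinearMap.pi fun j =>
        (EuclideanSpace.proj j : Epar M →L[ℝ] ℝ).smulRight
          (C j * x j * NormedSpace.exp (θ j • x j))) h' l
        = ((EuclideanSpace.proj l : Epar M →L[ℝ] ℝ) h')
            • (C l * x l * NormedSpace.exp (θ l • x l)) := rfl
    rw [this, ContinuousMultilinearMap.map_update_smul]
    congr 1
    rw [stF, wfam_update]
  rw [heq] at h
  exact h

lemma stF_norm_le (hd : 0 < d) (v : Hsp d) (x C : Fin M → CA d) (b : Fin M → ℝ)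
    (hb : ∀ l, ‖C l‖ ≤ b l)
    (hx : ∀ l (t : ℝ), ‖NormedSpace.exp (t • x l)‖ = 1) (θ : Epar M) :
    ‖stF v x C θ‖ ≤ (∏ l : Fin M, b l) * ‖v‖ := by
  haveI : Nonempty (Fin d) := ⟨⟨0, hd⟩⟩
  rw [stF, bigΨ_apply]
  set a := wfam x C θ with ha
  calc ‖(List.ofFn fun i : Fin M => a i.rev).prod v‖
      ≤ ‖(List.ofFn fun i : Fin M => a i.rev).prod‖ * ‖v‖ :=
        ContinuousLinearMap.le_opNorm _ v
    _ ≤ ((List.ofFn fun i : Fin M => a i.rev).map norm).prod * ‖v‖ := by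
        exact mul_le_mul_of_nonneg_right (List.norm_prod_le _) (norm_nonneg v)
    _ = (∏ i : Fin M, ‖a i.rev‖) * ‖v‖ := by
        rw [List.map_ofFn, List.prod_ofFn]; rfl
    _ = (∏ i : Fin M, ‖a i‖) * ‖v‖ := by
        congr 1
        exact Fintype.prod_equiv Fin.revPerm _ _ (fun i => rfl)
    _ ≤ (∏ l : Fin M, b l) * ‖v‖ := by
        refine mul_le_mul_of_nonneg_right ?_ (norm_nonneg v)
        refine Finset.prod_le_prod (fun i _ => norm_nonneg _) (fun i _ => ?_)
        calc ‖a i‖ ≤ ‖C i‖ * ‖NormedSpace.exp (θ i • x i)‖ := norm_mul_le _ _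
          _ = ‖C i‖ := by rw [hx i (θ i), mul_one]
          _ ≤ b i := hb i

lemma circuitState_eq (V : Fin (M + 1) → Matrix (Fin d) (Fin d) ℂ)
    (H : Fin M → Matrix (Fin d) (Fin d) ℂ) (ψ₀ : Hsp d) :
    circuitState V H ψ₀
      = stF (pim (V 0) ψ₀) (xf H) (fun j => pim (V j.succ)) := by
  funext θ
  rw [stF, bigΨ_apply']
  unfold circuitState
  rw [← pim_apply, map_mul, ContinuousLinearMap.mul_apply]
  congr 2
  rw [map_list_prod (pim (d := d)), List.map_reverse, List.map_ofFn]
  congr 2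
  refine List.ofFn_inj.mpr (funext fun j => ?_)
  show pim (V j.succ * gate (H j) (θ j)) = wfam (xf H) (fun j => pim (V j.succ)) θ j
  rw [map_mul, wfam, pim_gate]


lemma norm_pim_eq (A : Matrix (Fin d) (Fin d) ℂ) : ‖pim A‖ = l2OpNorm A := rfl

lemma re_inner_eq (x y : Hsp d) : ⟪x, y⟫_ℝ = (⟪x, y⟫_ℂ).re := by
  rw [PiLp.inner_apply, PiLp.inner_apply, Complex.re_sum]
  exact Finset.sum_congr rfl fun i _ => by rw [Complex.inner]; rfl

lemma quad_nonneg {A : Matrix (Fin d) (Fin d) ℂ} (hA : A.PosSemidef) (y : Hsp d) :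
    0 ≤ ⟪y, pim A y⟫_ℝ := by
  have hpim : pim (d := d) = Matrix.toEuclideanCLM := rfl
  rw [re_inner_eq, hpim, EuclideanSpace.inner_eq_star_dotProduct,
    Matrix.ofLp_toEuclideanCLM, dotProduct_comm]
  have h := hA.dotProduct_mulVec_nonneg (WithLp.ofLp y)
  have := (RCLike.nonneg_iff (K := ℂ)).mp h
  simpa using this.1

lemma adjoint_pim_herm {A : Matrix (Fin d) (Fin d) ℂ} (hA : A.IsHermitian) :
    ContinuousLinearMap.adjoint (pim A) = pim A := by
  rw [← ContinuousLinearMap.star_eq_adjoint, ← map_star, Matrix.star_eq_conjTranspose, hA.eq]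

lemma inner_pim_symm {A : Matrix (Fin d) (Fin d) ℂ} (hA : A.IsHermitian) (a b : Hsp d) :
    ⟪a, pim A b⟫_ℝ = ⟪b, pim A a⟫_ℝ := by
  rw [re_inner_eq, re_inner_eq]
  have h1 : ⟪a, pim A b⟫_ℂ = ⟪pim A a, b⟫_ℂ := by
    rw [← ContinuousLinearMap.adjoint_inner_left, adjoint_pim_herm hA]
  rw [h1, ← inner_conj_symm (pim A a) b, Complex.conj_re]

open scoped MatrixOrder in
lemma norm_pim_P_le {P : Matrix (Fin d) (Fin d) ℂ} (hP : IsPOVMElement P) : ‖pim P‖ ≤ 1 := by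
  obtain ⟨h1, h2⟩ := hP
  have hsub : (P - P * P).PosSemidef := by
    have hSH : (CFC.sqrt P).conjTranspose = CFC.sqrt P :=
      (Matrix.nonneg_iff_posSemidef.mp (CFC.sqrt_nonneg P)).1
    have hc := h2.mul_mul_conjTranspose_same (CFC.sqrt P)
    rw [hSH] at hc
    have hSS : CFC.sqrt P * CFC.sqrt P = P :=
      CFC.sqrt_mul_sqrt_self P (Matrix.nonneg_iff_posSemidef.mpr h1)
    have hgen : ∀ S Q : Matrix (Fin d) (Fin d) ℂ, S * S = Q → S * (1 - Q) * S = Q - Q * Q := by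
      intro S Q h
      subst h
      noncomm_ring
    rwa [hgen _ _ hSS] at hc
  refine ContinuousLinearMap.opNorm_le_bound _ zero_le_one fun y => ?_
  rw [one_mul]
  have e1 : ‖pim P y‖ ^ 2 = ⟪pim P y, pim P y⟫_ℝ := (real_inner_self_eq_norm_sq _).symm
  have e2 : ⟪pim P y, pim P y⟫_ℝ = ⟪y, pim (P * P) y⟫_ℝ := by
    rw [re_inner_eq, re_inner_eq]
    congr 1
    rw [map_mul, ContinuousLinearMap.mul_apply]
    conv_rhs => rw [← ContinuousLinearMap.adjoint_inner_left]
    rw [adjoint_pim_herm h1.1]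
  have e3 : ⟪y, pim (P * P) y⟫_ℝ ≤ ⟪y, pim P y⟫_ℝ := by
    have h := quad_nonneg hsub y
    rw [map_sub, ContinuousLinearMap.sub_apply, inner_sub_right] at h
    linarith
  have e4 : ⟪y, pim P y⟫_ℝ ≤ ‖y‖ ^ 2 := by
    have h := quad_nonneg h2 y
    rw [map_sub, map_one, ContinuousLinearMap.sub_apply, ContinuousLinearMap.one_apply,
      inner_sub_right, real_inner_self_eq_norm_sq] at h
    linarith
  have key : ‖pim P y‖ ^ 2 ≤ ‖y‖ ^ 2 := by
    rw [e1, e2]; linarith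
  nlinarith [norm_nonneg (pim P y), norm_nonneg y]

lemma measProb_eq (V : Fin (M + 1) → Matrix (Fin d) (Fin d) ℂ)
    (H : Fin M → Matrix (Fin d) (Fin d) ℂ) (ψ₀ : Hsp d) (P : Matrix (Fin d) (Fin d) ℂ) :
    measProb V H ψ₀ P = fun θ =>
      ⟪stF (pim (V 0) ψ₀) (xf H) (fun j => pim (V j.succ)) θ,
        ((pim P).restrictScalars ℝ)
          (stF (pim (V 0) ψ₀) (xf H) (fun j => pim (V j.succ)) θ)⟫_ℝ := by
  funext θ
  have hc := congrFun (circuitState_eq V H ψ₀) θ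
  rw [measProb, hc, re_inner_eq]
  rw [show (((pim P).restrictScalars ℝ) (stF (pim (V 0) ψ₀) (xf H) (fun j => pim (V j.succ)) θ))
      = Matrix.toEuclideanLin P (stF (pim (V 0) ψ₀) (xf H) (fun j => pim (V j.succ)) θ) from
    pim_apply P _]

lemma prod_update_mul (b : Fin M → ℝ) (l : Fin M) (c : ℝ) :
    ∏ i : Fin M, Function.update b l (b l * c) i = c * ∏ i : Fin M, b i := by
  rw [Finset.prod_update_of_mem (Finset.mem_univ l), mul_comm (b l) c, mul_assoc]
  congr 1
  rw [← Finset.mul_prod_erase Finset.univ b (Finset.mem_univ l), Finset.erase_eq]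

lemma sum_abs_le (h : Epar M) : ∑ k : Fin M, |h k| ≤ Real.sqrt M * ‖h‖ := by
  classical
  set u : Epar M := (WithLp.equiv 2 (Fin M → ℝ)).symm (fun k => |h k|) with hu
  set o : Epar M := (WithLp.equiv 2 (Fin M → ℝ)).symm (fun _ => (1 : ℝ)) with ho
  have h1 : ⟪u, o⟫_ℝ = ∑ k : Fin M, |h k| := by
    rw [PiLp.inner_apply]
    refine Finset.sum_congr rfl fun k _ => ?_
    simp [hu, ho, WithLp.equiv_symm_apply, PiLp.toLp_apply, RCLike.inner_apply, conj_trivial]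
  have h2 : ‖u‖ = ‖h‖ := by
    rw [EuclideanSpace.norm_eq, EuclideanSpace.norm_eq]
    congr 1
    refine Finset.sum_congr rfl fun k _ => ?_
    simp [hu, WithLp.equiv_symm_apply, PiLp.toLp_apply, Real.norm_eq_abs, sq_abs, abs_abs]
  have h3 : ‖o‖ = Real.sqrt M := by
    rw [EuclideanSpace.norm_eq]
    simp [ho, WithLp.equiv_symm_apply, PiLp.toLp_apply]
  calc ∑ k : Fin M, |h k| = ⟪u, o⟫_ℝ := h1.symm
    _ ≤ ‖u‖ * ‖o‖ := real_inner_le_norm u o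
    _ = Real.sqrt M * ‖h‖ := by rw [h2, h3, mul_comm]


lemma key (hd : 0 < d) (v : Hsp d) (x C0 : Fin M → CA d)
    (Pr : Hsp d →L[ℝ] Hsp d) {K : ℝ}
    (hxK : ∀ j, ‖x j‖ ≤ K) (hK0 : 0 ≤ K)
    (hexp : ∀ l (t : ℝ), ‖NormedSpace.exp (t • x l)‖ = 1)
    (hC0 : ∀ l, ‖C0 l‖ ≤ 1) (hv : ‖v‖ ≤ 1) (hPr : ‖Pr‖ ≤ 1)
    (hsymm : ∀ a b : Hsp d, ⟪a, Pr b⟫_ℝ = ⟪b, Pr a⟫_ℝ)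
    (α β : Epar M) :
    ‖gradient (fun θ => ⟪stF v x C0 θ, Pr (stF v x C0 θ)⟫_ℝ) α
        - gradient (fun θ => ⟪stF v x C0 θ, Pr (stF v x C0 θ)⟫_ℝ) β‖
      ≤ 4 * M * K ^ 2 * ‖α - β‖ := by
  classical
  -- first and second derivative "states"
  set ψ : Epar M → Hsp d := stF v x C0 with hψdef
  set ψ1 : Fin M → Epar M → Hsp d := fun j => stF v x (dC x C0 j) with hψ1def
  set ψ2 : Fin M → Fin M → Epar M → Hsp d :=
    fun j l => stF v x (dC x (dC x C0 j) l) with hψ2def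
  -- norm bounds on the states
  have nψ : ∀ θ, ‖ψ θ‖ ≤ 1 := by
    intro θ
    have h := stF_norm_le hd v x C0 (fun _ => 1) hC0 hexp θ
    simp only [Finset.prod_const_one, one_mul] at h
    exact h.trans hv
  have hdCb : ∀ (C : Fin M → CA d) (b : Fin M → ℝ), (∀ l, ‖C l‖ ≤ b l) → ∀ j i,
      ‖dC x C j i‖ ≤ Function.update b j (b j * K) i := by
    intro C b hb j i
    by_cases hi : i = j
    · subst hi
      rw [dC, Function.update_self, Function.update_self]
      exact (norm_mul_le _ _).trans (mul_le_mul (hb i) (hxK i) (norm_nonneg _)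
        ((norm_nonneg (C i)).trans (hb i)))
    · rw [dC, Function.update_of_ne hi, Function.update_of_ne hi]
      exact hb i
  have nψ1 : ∀ j θ, ‖ψ1 j θ‖ ≤ K := by
    intro j θ
    have h := stF_norm_le hd v x (dC x C0 j) _ (hdCb C0 (fun _ => 1) hC0 j) hexp θ
    rw [prod_update_mul] at h
    simp only [Finset.prod_const_one, mul_one] at h
    calc ‖ψ1 j θ‖ ≤ K * ‖v‖ := h
      _ ≤ K * 1 := mul_le_mul_of_nonneg_left hv hK0
      _ = K := mul_one K
  have nψ2 : ∀ j l θ, ‖ψ2 j l θ‖ ≤ K * K := by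
    intro j l θ
    have h := stF_norm_le hd v x (dC x (dC x C0 j) l) _
      (hdCb (dC x C0 j) _ (hdCb C0 (fun _ => 1) hC0 j) l) hexp θ
    rw [prod_update_mul, prod_update_mul] at h
    simp only [Finset.prod_const_one, mul_one] at h
    calc ‖ψ2 j l θ‖ ≤ K * K * ‖v‖ := by
          refine h.trans (le_of_eq ?_); ring
      _ ≤ K * K * 1 := mul_le_mul_of_nonneg_left hv (mul_nonneg hK0 hK0)
      _ = K * K := mul_one _
  -- derivatives
  set Lmap : Epar M → (Epar M →L[ℝ] Hsp d) := fun θ =>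
    ∑ l : Fin M, (EuclideanSpace.proj l : Epar M →L[ℝ] ℝ).smulRight (ψ1 l θ) with hLdef
  set LJ : Fin M → Epar M → (Epar M →L[ℝ] Hsp d) := fun j θ =>
    ∑ l : Fin M, (EuclideanSpace.proj l : Epar M →L[ℝ] ℝ).smulRight (ψ2 j l θ) with hLJdef
  have hder : ∀ θ, HasFDerivAt ψ (Lmap θ) θ := fun θ => stF_hasFDerivAt v x C0 θ
  have hder1 : ∀ j θ, HasFDerivAt (ψ1 j) (LJ j θ) θ := fun j θ =>
    stF_hasFDerivAt v x (dC x C0 j) θ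
  have hPψ : ∀ θ, HasFDerivAt (fun θ => Pr (ψ θ)) (Pr.comp (Lmap θ)) θ := fun θ =>
    Pr.hasFDerivAt.comp θ (hder θ)
  -- application formulas
  have hLapp : ∀ θ h, Lmap θ h = ∑ l : Fin M, h l • ψ1 l θ := by
    intro θ h
    rw [hLdef, ContinuousLinearMap.sum_apply]
    exact Finset.sum_congr rfl fun l _ => by
      rw [ContinuousLinearMap.smulRight_apply]; rfl
  have hLJapp : ∀ j θ h, LJ j θ h = ∑ l : Fin M, h l • ψ2 j l θ := by
    intro j θ h
    rw [hLJdef, ContinuousLinearMap.sum_apply]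
    exact Finset.sum_congr rfl fun l _ => by
      rw [ContinuousLinearMap.smulRight_apply]; rfl
  -- the gradient candidate
  set g : Fin M → Epar M → ℝ := fun j θ => 2 * ⟪ψ1 j θ, Pr (ψ θ)⟫_ℝ with hgdef
  set φm : Epar M → Epar M :=
    fun θ => (WithLp.equiv 2 (Fin M → ℝ)).symm (fun j => g j θ) with hφdef
  have hgrad : ∀ θ, HasGradientAt (fun θ => ⟪ψ θ, Pr (ψ θ)⟫_ℝ) (φm θ) θ := by
    intro θ
    rw [hasGradientAt_iff_hasFDerivAt]
    have hD := (hder θ).inner ℝ (hPψ θ)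
    convert hD using 1
    · rfl
    refine ContinuousLinearMap.ext fun h => ?_
    rw [InnerProductSpace.toDual_apply_apply]
    have hlhs : ⟪φm θ, h⟫_ℝ = ∑ j : Fin M, g j θ * h j := by
      rw [PiLp.inner_apply]
      exact Finset.sum_congr rfl fun j _ => by
        simp [hφdef, WithLp.equiv_symm_apply, PiLp.toLp_apply, RCLike.inner_apply, conj_trivial,
          mul_comm]
    have hrhs : ((fderivInnerCLM ℝ (ψ θ, Pr (ψ θ))).comp
          ((Lmap θ).prod (Pr.comp (Lmap θ)))) h
        = ∑ j : Fin M, g j θ * h j := by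
      rw [ContinuousLinearMap.comp_apply, ContinuousLinearMap.prod_apply,
        fderivInnerCLM_apply]
      rw [ContinuousLinearMap.comp_apply]
      rw [hsymm (ψ θ) (Lmap θ h)]
      rw [hLapp θ h, sum_inner]
      rw [← two_mul, Finset.mul_sum]
      exact Finset.sum_congr rfl fun j _ => by
        rw [real_inner_smul_left, hgdef]; ring
    rw [hlhs, hrhs]
  -- second derivative of the gradient candidate
  set D : Fin M → Epar M → (Epar M →L[ℝ] ℝ) := fun j θ =>
    (2 : ℝ) • ((fderivInnerCLM ℝ (ψ1 j θ, Pr (ψ θ))).comp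
      ((LJ j θ).prod (Pr.comp (Lmap θ)))) with hDdef
  set Bmap : Epar M → (Epar M →L[ℝ] Epar M) := fun θ =>
    (((PiLp.continuousLinearEquiv 2 ℝ (fun _ : Fin M => ℝ)).symm :
        (Fin M → ℝ) →L[ℝ] Epar M)).comp
      (ContinuousLinearMap.pi fun j => D j θ) with hBdef
  have hg : ∀ j θ, HasFDerivAt (g j) (D j θ) θ := fun j θ =>
    ((hder1 j θ).inner ℝ (hPψ θ)).const_mul 2
  have hφder : ∀ θ, HasFDerivAt φm (Bmap θ) θ := by
    intro θ
    have hpi : HasFDerivAt (fun θ => (fun j => g j θ))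
        (ContinuousLinearMap.pi fun j => D j θ) θ :=
      (hasFDerivAt_pi (𝕜 := ℝ)).2 fun j => hg j θ
    exact (((PiLp.continuousLinearEquiv 2 ℝ (fun _ : Fin M => ℝ)).symm :
        (Fin M → ℝ) →L[ℝ] Epar M)).hasFDerivAt.comp θ hpi
  -- bound on the second derivative
  have hPz : ∀ z : Hsp d, ‖Pr z‖ ≤ ‖z‖ := by
    intro z
    calc ‖Pr z‖ ≤ ‖Pr‖ * ‖z‖ := Pr.le_opNorm z
      _ ≤ 1 * ‖z‖ := mul_le_mul_of_nonneg_right hPr (norm_nonneg z)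
      _ = ‖z‖ := one_mul _
  have hDbound : ∀ j θ h, |D j θ h| ≤ 4 * K ^ 2 * (Real.sqrt M * ‖h‖) := by
    intro j θ h
    set S := ∑ k : Fin M, |h k| with hSdef
    have hS0 : 0 ≤ S := Finset.sum_nonneg fun k _ => abs_nonneg _
    have hSle : S ≤ Real.sqrt M * ‖h‖ := sum_abs_le h
    have hLh : ‖Lmap θ h‖ ≤ S * K := by
      rw [hLapp θ h]
      calc ‖∑ l : Fin M, h l • ψ1 l θ‖ ≤ ∑ l : Fin M, ‖h l • ψ1 l θ‖ :=
            norm_sum_le _ _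
        _ = ∑ l : Fin M, |h l| * ‖ψ1 l θ‖ := by
            exact Finset.sum_congr rfl fun l _ => by
              rw [norm_smul, Real.norm_eq_abs]
        _ ≤ ∑ l : Fin M, |h l| * K := Finset.sum_le_sum fun l _ =>
            mul_le_mul_of_nonneg_left (nψ1 l θ) (abs_nonneg _)
        _ = S * K := by rw [← Finset.sum_mul]
    have hLJh : ‖LJ j θ h‖ ≤ S * (K * K) := by
      rw [hLJapp j θ h]
      calc ‖∑ l : Fin M, h l • ψ2 j l θ‖ ≤ ∑ l : Fin M, ‖h l • ψ2 j l θ‖ :=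
            norm_sum_le _ _
        _ = ∑ l : Fin M, |h l| * ‖ψ2 j l θ‖ := by
            exact Finset.sum_congr rfl fun l _ => by
              rw [norm_smul, Real.norm_eq_abs]
        _ ≤ ∑ l : Fin M, |h l| * (K * K) := Finset.sum_le_sum fun l _ =>
            mul_le_mul_of_nonneg_left (nψ2 j l θ) (abs_nonneg _)
        _ = S * (K * K) := by rw [← Finset.sum_mul]
    have hDh : D j θ h = 2 * (⟪ψ1 j θ, Pr (Lmap θ h)⟫_ℝ + ⟪LJ j θ h, Pr (ψ θ)⟫_ℝ) := by
      rw [hDdef]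
      rw [ContinuousLinearMap.smul_apply, ContinuousLinearMap.comp_apply,
        ContinuousLinearMap.prod_apply, fderivInnerCLM_apply, ContinuousLinearMap.comp_apply,
        smul_eq_mul]
    have ht1 : |⟪ψ1 j θ, Pr (Lmap θ h)⟫_ℝ| ≤ K * (S * K) := by
      calc |⟪ψ1 j θ, Pr (Lmap θ h)⟫_ℝ| ≤ ‖ψ1 j θ‖ * ‖Pr (Lmap θ h)‖ :=
            abs_real_inner_le_norm _ _
        _ ≤ K * (S * K) := mul_le_mul (nψ1 j θ) ((hPz _).trans hLh) (norm_nonneg _) hK0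
    have ht2 : |⟪LJ j θ h, Pr (ψ θ)⟫_ℝ| ≤ S * (K * K) := by
      calc |⟪LJ j θ h, Pr (ψ θ)⟫_ℝ| ≤ ‖LJ j θ h‖ * ‖Pr (ψ θ)‖ :=
            abs_real_inner_le_norm _ _
        _ ≤ (S * (K * K)) * 1 := mul_le_mul hLJh ((hPz _).trans (nψ θ)) (norm_nonneg _)
            (by positivity)
        _ = S * (K * K) := mul_one _
    calc |D j θ h| = |2 * (⟪ψ1 j θ, Pr (Lmap θ h)⟫_ℝ + ⟪LJ j θ h, Pr (ψ θ)⟫_ℝ)| := by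
          rw [hDh]
      _ ≤ 2 * (|⟪ψ1 j θ, Pr (Lmap θ h)⟫_ℝ| + |⟪LJ j θ h, Pr (ψ θ)⟫_ℝ|) := by
          rw [abs_mul, abs_two]
          exact mul_le_mul_of_nonneg_left (abs_add_le _ _) (by norm_num)
      _ ≤ 2 * (K * (S * K) + S * (K * K)) := by
          have := add_le_add ht1 ht2
          nlinarith
      _ = 4 * K ^ 2 * S := by ring
      _ ≤ 4 * K ^ 2 * (Real.sqrt M * ‖h‖) := by
          exact mul_le_mul_of_nonneg_left hSle (by positivity)
  have hB : ∀ θ, ‖Bmap θ‖ ≤ 4 * M * K ^ 2 := by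
    intro θ
    refine ContinuousLinearMap.opNorm_le_bound _ (by positivity) fun h => ?_
    have hBh : Bmap θ h = (WithLp.equiv 2 (Fin M → ℝ)).symm (fun j => D j θ h) := rfl
    rw [hBh, EuclideanSpace.norm_eq]
    have hentry : ∀ j : Fin M,
        ‖(WithLp.equiv 2 (Fin M → ℝ)).symm (fun j => D j θ h) j‖ ^ 2
          ≤ (4 * K ^ 2 * (Real.sqrt M * ‖h‖)) ^ 2 := by
      intro j
      rw [WithLp.equiv_symm_apply, PiLp.toLp_apply, Real.norm_eq_abs]
      exact pow_le_pow_left₀ (abs_nonneg _) (hDbound j θ h) 2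
    calc √(∑ j : Fin M, ‖(WithLp.equiv 2 (Fin M → ℝ)).symm (fun j => D j θ h) j‖ ^ 2)
        ≤ √(∑ _j : Fin M, (4 * K ^ 2 * (Real.sqrt M * ‖h‖)) ^ 2) :=
          Real.sqrt_le_sqrt (Finset.sum_le_sum fun j _ => hentry j)
      _ = √((M : ℝ) * (4 * K ^ 2 * (Real.sqrt M * ‖h‖)) ^ 2) := by
          rw [Finset.sum_const, Finset.card_univ, Fintype.card_fin, nsmul_eq_mul]
      _ = Real.sqrt M * (4 * K ^ 2 * (Real.sqrt M * ‖h‖)) := by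
          rw [Real.sqrt_mul (Nat.cast_nonneg M), Real.sqrt_sq (by positivity)]
      _ = (Real.sqrt M * Real.sqrt M) * (4 * K ^ 2 * ‖h‖) := by ring
      _ = 4 * M * K ^ 2 * ‖h‖ := by
          rw [Real.mul_self_sqrt (Nat.cast_nonneg M)]; ring
  -- mean value inequality
  have hlip := Convex.norm_image_sub_le_of_norm_hasFDerivWithin_le (𝕜 := ℝ)
    (f := φm) (f' := Bmap) (s := Set.univ)
    (fun θ _ => (hφder θ).hasFDerivWithinAt) (fun θ _ => hB θ) convex_univ
    (Set.mem_univ β) (Set.mem_univ α)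
  rw [(hgrad α).gradient, (hgrad β).gradient]
  exact hlip

end QAux

/-- First part of the smoothness lemma: the measurement probability of a parameterized
quantum circuit is `L₁`-smooth with `L₁ = 4·M·H_max²`, i.e. its gradient is Lipschitz with
that constant. -/
theorem measProb_gradient_lipschitz (d M : ℕ) (hd : 0 < d) (hM : 0 < M)
    (V : Fin (M + 1) → Matrix (Fin d) (Fin d) ℂ)
    (H : Fin M → Matrix (Fin d) (Fin d) ℂ)
    (ψ₀ : EuclideanSpace ℂ (Fin d))
    (hV : ∀ k, V k ∈ Matrix.unitaryGroup (Fin d) ℂ)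
    (hH : ∀ j, (H j).IsHermitian)
    (hψ₀ : ‖ψ₀‖ = 1)
    (P : Matrix (Fin d) (Fin d) ℂ) (hP : IsPOVMElement P) :
    ∀ α β : EuclideanSpace ℝ (Fin M),
      ‖gradient (measProb V H ψ₀ P) α - gradient (measProb V H ψ₀ P) β‖ ≤
        4 * M * Hmax H ^ 2 * ‖α - β‖ := by
  intro α β
  rw [QAux.measProb_eq V H ψ₀ P]
  have hK0 : 0 ≤ Hmax H := by
    have h0 : 0 ≤ l2OpNorm (H ⟨0, hM⟩) := norm_nonneg _
    exact h0.trans (le_ciSup (f := fun j => l2OpNorm (H j))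
      (Set.Finite.bddAbove (Set.finite_range _)) (⟨0, hM⟩ : Fin M))
  have hxK : ∀ j, ‖QAux.xf H j‖ ≤ Hmax H := by
    intro j
    have hj : ‖QAux.xf H j‖ = l2OpNorm (H j) := by
      rw [QAux.xf, norm_smul Complex.I (QAux.pim (H j)), Complex.norm_I, one_mul,
        QAux.norm_pim_eq]
    rw [hj]
    exact le_ciSup (f := fun j => l2OpNorm (H j))
      (Set.Finite.bddAbove (Set.finite_range _)) j
  have hv : ‖QAux.pim (V 0) ψ₀‖ ≤ 1 := by
    calc ‖QAux.pim (V 0) ψ₀‖ ≤ ‖QAux.pim (V 0)‖ * ‖ψ₀‖ := (QAux.pim (V 0)).le_opNorm ψ₀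
      _ = 1 := by rw [QAux.pim_unitary hd (hV 0), hψ₀, one_mul]
  have hPr : ‖(QAux.pim P).restrictScalars ℝ‖ ≤ 1 := by
    rw [ContinuousLinearMap.norm_restrictScalars]
    exact QAux.norm_pim_P_le hP
  exact QAux.key hd (QAux.pim (V 0) ψ₀) (QAux.xf H) (fun j => QAux.pim (V j.succ))
    ((QAux.pim P).restrictScalars ℝ) hxK hK0 (QAux.norm_exp_xf hd H hH)
    (fun l => le_of_eq (QAux.pim_unitary hd (hV l.succ))) hv hPr
    (fun a b => QAux.inner_pim_symm hP.1.1 a b) α β
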